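/- arXiv:1111.1857 — 4 statements merged into one kernel-verified Lean document; each statement's English description precedes it below -/
import Mathlib

section
/- Consider the chain $m_n \ddot{x}_n = V_n'(x_{n+1}-x_n) - V_{n-1}'(x_n-x_{n-1})$ with $m_n>0$, $V_n(x) = W_n[(-x)_+]$, where $W_n \in C^1(\mathbb{R}_+, \mathbb{R}_+)$, $W_n'(0)=0$, $W_n'(x)>0$ for $x>0$, and there exist $r>0$, $n_0 \in \mathbb{Z}$, and a monotone increasing continuous function $f$ on $[0,r]$ with $f(0)=0$ such that $W_n'(x) \le f(x)$ for all $x \in [0,r]$ and all $n \ge n_0$. Then every $T$-periodic solution satisfying $\lim_{n\to+\infty} \|x_n - x_{n-1}\|_{L^\infty} = 0$ is independent of $t$ and nondecreasing in $n$. -/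
open MeasureTheory intervalIntegral Set

/-- Nonexistence of breathers in FPU chains with repulsive unilateral
interactions `V_n(x) = W_n((-x)_+)`: every `T`-periodic solution whose relative
displacements tend to `0` (uniformly in time) as `n → +∞` is a static,
nondecreasing (in `n`) equilibrium. -/
theorem no_breathers_repulsive_FPU
    (m : ℤ → ℝ) (hm : ∀ n, 0 < m n)
    (W DW : ℤ → ℝ → ℝ)
    (hW : ∀ n, ∀ y ≥ (0:ℝ), HasDerivAt (W n) (DW n y) y)
    (hDWcont : ∀ n, ContinuousOn (DW n) (Set.Ici 0))
    (hWpos : ∀ n, ∀ y ≥ (0:ℝ), 0 ≤ W n y)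
    (hDW0 : ∀ n, DW n 0 = 0)
    (hDWpos : ∀ n, ∀ y > (0:ℝ), 0 < DW n y)
    (r : ℝ) (hr : 0 < r) (n₀ : ℤ) (f : ℝ → ℝ)
    (hfcont : ContinuousOn f (Set.Icc 0 r))
    (hfmono : MonotoneOn f (Set.Icc 0 r))
    (hf0 : f 0 = 0)
    (hbound : ∀ n ≥ n₀, ∀ y ∈ Set.Icc (0:ℝ) r, DW n y ≤ f y)
    (x : ℤ → ℝ → ℝ) (hx : ∀ n, ContDiff ℝ 2 (x n))
    (T : ℝ) (hT : 0 < T)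
    (hper : ∀ n t, x n (t + T) = x n t)
    (heq : ∀ n t, m n * deriv (deriv (x n)) t
      = -DW n (max (x n t - x (n+1) t) 0)
        + DW (n-1) (max (x (n-1) t - x n t) 0))
    (hloc : ∀ ε > (0:ℝ), ∃ N : ℤ, ∀ n ≥ N, ∀ t, |x n t - x (n-1) t| ≤ ε) :
    (∀ n t s, x n t = x n s) ∧ (∀ n t, x n t ≤ x (n+1) t) := by
  -- basic regularity facts
  have hxc : ∀ n, Continuous (x n) := fun n => (hx n).continuous
  have hxd : ∀ n, Differentiable ℝ (x n) := fun n =>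
    (hx n).differentiable (by norm_num)
  have hx1 : ∀ n, ContDiff ℝ 1 (deriv (x n)) := by
    intro n
    have h2 : ContDiff ℝ (1+1) (x n) := by norm_num; exact hx n
    exact ((contDiff_succ_iff_deriv).1 h2).2.2
  have hxd' : ∀ n, Differentiable ℝ (deriv (x n)) := fun n =>
    (hx1 n).differentiable (by norm_num)
  have hxc'' : ∀ n, Continuous (deriv (deriv (x n))) := fun n =>
    ((contDiff_succ_iff_deriv (n := 0)).1 (by norm_num; exact hx1 n)).2.2.continuous
  -- the interaction forces
  set F : ℤ → ℝ → ℝ := fun n t => DW n (max (x n t - x (n+1) t) 0) with hFdef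
  have hFcont : ∀ n, Continuous (F n) := by
    intro n
    have h1 : Continuous fun t => max (x n t - x (n+1) t) 0 :=
      ((hxc n).sub (hxc (n+1))).max continuous_const
    exact (hDWcont n).comp_continuous h1 (fun t => Set.mem_Ici.2 (le_max_right _ _))
  have hFnonneg : ∀ n t, 0 ≤ F n t := by
    intro n t
    rcases (le_max_right (x n t - x (n+1) t) 0).lt_or_eq with h | h
    · exact (hDWpos n _ h).le
    · simp [hFdef, ← h, hDW0 n]
  -- periodicity of everything in sight
  have hxper : ∀ n, Function.Periodic (x n) T := fun n t => hper n t
  have hdper : ∀ n t, deriv (x n) (t + T) = deriv (x n) t := by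
    intro n t
    have h1 : (fun s => x n (s + T)) = x n := funext fun s => hper n s
    calc deriv (x n) (t + T) = deriv (fun s => x n (s + T)) t :=
          (deriv_comp_add_const _ _ _).symm
      _ = deriv (x n) t := by rw [h1]
  have hFper : ∀ n, Function.Periodic (F n) T := by
    intro n t; simp only [hFdef, hper]
  -- the integral of x n '' over a period vanishes
  have hI0 : ∀ n, ∫ t in (0:ℝ)..T, deriv (deriv (x n)) t = 0 := by
    intro n
    rw [intervalIntegral.integral_deriv_eq_sub
        (fun t _ => (hxd' n t))
        ((hxc'' n).intervalIntegrable 0 T)]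
    have := hdper n 0
    rw [zero_add] at this
    rw [this, sub_self]
  -- hence the flux ∫ F n is independent of n
  set I : ℤ → ℝ := fun n => ∫ t in (0:ℝ)..T, F n t with hIdef
  have hIint : ∀ n, IntervalIntegrable (F n) volume 0 T := fun n =>
    (hFcont n).intervalIntegrable 0 T
  have hkey : ∀ n : ℤ, I n = I (n - 1) := by
    intro n
    have hFval : ∀ t, F (n-1) t = DW (n-1) (max (x (n-1) t - x n t) 0) := by
      intro t; simp only [hFdef, sub_add_cancel]
    have h1 : ∫ t in (0:ℝ)..T, m n * deriv (deriv (x n)) t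
        = ∫ t in (0:ℝ)..T, (-F n t + F (n-1) t) := by
      apply intervalIntegral.integral_congr
      intro t _
      show m n * deriv (deriv (x n)) t = -F n t + F (n-1) t
      rw [heq n t, hFval t]
    have h2 : ∫ t in (0:ℝ)..T, (-F n t + F (n-1) t) = I (n-1) - I n := by
      rw [intervalIntegral.integral_congr (g := fun t => F (n-1) t - F n t)
          (fun t _ => by show -F n t + F (n-1) t = F (n-1) t - F n t; ring),
        intervalIntegral.integral_sub (hIint (n-1)) (hIint n)]
    rw [intervalIntegral.integral_const_mul, hI0 n, mul_zero, h2] at h1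
    linarith [h1]
  have hIconst : ∀ n : ℤ, I n = I 0 := by
    intro n
    induction n using Int.induction_on with
    | zero => rfl
    | succ k ih => have := hkey (k+1); simp only [add_sub_cancel_right] at this; rw [this, ih]
    | pred k ih => have := hkey (-(k:ℤ)); rw [← this]; exact ih
  have hInonneg : I 0 ≤ I 0 := le_rfl
  have hI0nonneg : 0 ≤ I 0 := by
    apply intervalIntegral.integral_nonneg hT.le
    intro t _; exact hFnonneg 0 t
  -- the flux is ≤ T * ε for every ε > 0
  have hIle : ∀ ε > (0:ℝ), I 0 ≤ T * ε := by
    intro ε hε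
    -- continuity of f at 0 within Icc 0 r
    have hfc0 : ContinuousWithinAt f (Set.Icc 0 r) 0 :=
      hfcont 0 ⟨le_rfl, hr.le⟩
    have := Metric.continuousWithinAt_iff.1 hfc0 ε hε
    obtain ⟨δ, hδ, hδf⟩ := this
    set y₀ : ℝ := min (δ/2) r with hy₀def
    have hy₀pos : 0 < y₀ := lt_min (by linarith) hr
    have hy₀mem : y₀ ∈ Set.Icc (0:ℝ) r := ⟨hy₀pos.le, min_le_right _ _⟩
    have hy₀lt : dist y₀ 0 < δ := by
      rw [Real.dist_eq, sub_zero, abs_of_pos hy₀pos]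
      exact lt_of_le_of_lt (min_le_left _ _) (by linarith)
    have hfy₀ : f y₀ < ε := by
      have := hδf hy₀mem hy₀lt
      rw [Real.dist_eq, hf0, sub_zero] at this
      exact lt_of_le_of_lt (le_abs_self _) this
    obtain ⟨N, hN⟩ := hloc y₀ hy₀pos
    set n : ℤ := max N n₀ + 1 with hndef
    have hnN : n ≥ N := by
      have := le_max_left N n₀; omega
    have hn₀ : n - 1 ≥ n₀ := by
      have := le_max_right N n₀; omega
    have hFle : ∀ t, F (n-1) t ≤ f y₀ := by
      intro t
      have hFval : F (n-1) t = DW (n-1) (max (x (n-1) t - x n t) 0) := by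
        simp only [hFdef, sub_add_cancel]
      set y : ℝ := max (x (n-1) t - x n t) 0 with hydef
      have hy0 : 0 ≤ y := le_max_right _ _
      have hyle : y ≤ y₀ := by
        have h1 : |x n t - x (n-1) t| ≤ y₀ := hN n hnN t
        have h2 : x (n-1) t - x n t ≤ y₀ := by
          have := neg_abs_le (x n t - x (n-1) t)
          have := abs_le.1 h1
          linarith [this.1]
        exact max_le h2 hy₀pos.le
      have hymem : y ∈ Set.Icc (0:ℝ) r := ⟨hy0, hyle.trans (min_le_right _ _)⟩
      calc F (n-1) t = DW (n-1) y := hFval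
        _ ≤ f y := hbound (n-1) hn₀ y hymem
        _ ≤ f y₀ := hfmono hymem hy₀mem hyle
    have h1 : I (n-1) ≤ ∫ _t in (0:ℝ)..T, f y₀ := by
      apply intervalIntegral.integral_mono_on hT.le (hIint (n-1))
        (intervalIntegrable_const)
      intro t _; exact hFle t
    rw [intervalIntegral.integral_const, smul_eq_mul, sub_zero] at h1
    calc I 0 = I (n-1) := (hIconst (n-1)).symm
      _ ≤ T * f y₀ := h1
      _ ≤ T * ε := by nlinarith
  have hIzero : I 0 = 0 := by
    have hle : I 0 ≤ 0 := by
      by_contra h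
      push_neg at h
      have := hIle (I 0 / (2*T)) (by positivity)
      rw [mul_div_assoc'] at this
      have h2 : T * I 0 / (2*T) = I 0 / 2 := by field_simp
      rw [h2] at this
      linarith
    linarith
  -- hence each F n vanishes identically
  have hFzero : ∀ n t, F n t = 0 := by
    intro n t₀
    have hint : ∫ s in (t₀ - T)..(t₀ - T) + T, F n s = 0 := by
      rw [(hFper n).intervalIntegral_add_eq (t₀ - T) 0, zero_add]
      rw [← hIconst n] at hIzero
      exact hIzero
    have hab : t₀ - T ≤ (t₀ - T) + T := by linarith
    have hae : F n =ᵐ[volume.restrict (Set.Ioc (t₀ - T) ((t₀ - T) + T))] 0 := by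
      exact (intervalIntegral.integral_eq_zero_iff_of_le_of_nonneg_ae hab
        (Filter.Eventually.of_forall fun t => hFnonneg n t)
        ((hFcont n).intervalIntegrable _ _)).1 hint
    have heqon : Set.EqOn (F n) 0 (Set.Ioc (t₀ - T) ((t₀ - T) + T)) := by
      apply Measure.eqOn_of_ae_eq hae (hFcont n).continuousOn continuousOn_const
      rw [interior_Ioc, closure_Ioo (by linarith : t₀ - T ≠ (t₀ - T) + T)]
      exact Set.Ioc_subset_Icc_self
    exact heqon ⟨by linarith, by linarith⟩
  -- second derivatives vanish
  have hdd : ∀ n t, deriv (deriv (x n)) t = 0 := by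
    intro n t
    have hFval : F (n-1) t = DW (n-1) (max (x (n-1) t - x n t) 0) := by
      simp only [hFdef, sub_add_cancel]
    have h1 : DW n (max (x n t - x (n+1) t) 0) = 0 := hFzero n t
    have h2 : DW (n-1) (max (x (n-1) t - x n t) 0) = 0 := by
      rw [← hFval]; exact hFzero (n-1) t
    have h : m n * deriv (deriv (x n)) t = 0 := by
      rw [heq n t, h1, h2]; ring
    exact (mul_eq_zero.1 h).resolve_left (hm n).ne'
  -- deriv (x n) is constant
  have hderconst : ∀ n t, deriv (x n) t = deriv (x n) 0 :=
    fun n t => is_const_of_deriv_eq_zero (hxd' n) (hdd n) t 0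
  -- the constant is zero by periodicity
  have hderzero : ∀ n t, deriv (x n) t = 0 := by
    intro n t
    set c : ℝ := deriv (x n) 0 with hc
    have hg : ∀ s, HasDerivAt (fun u => x n u - c * u) (deriv (x n) s - c) s := fun s => by
      exact (((hxd n s).hasDerivAt).sub ((hasDerivAt_id' s).const_mul c)).congr_deriv (by ring)
    have hgd : Differentiable ℝ (fun u => x n u - c * u) :=
      fun s => (hg s).differentiableAt
    have hgz : ∀ s, deriv (fun u => x n u - c * u) s = 0 := by
      intro s
      rw [(hg s).deriv, hderconst n s, ← hc, sub_self]
    have hgconst := is_const_of_deriv_eq_zero hgd hgz T 0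
    have hxT : x n T = x n 0 := by have := hper n 0; rwa [zero_add] at this
    have hcT : c * T = 0 := by
      have : x n T - c * T = x n 0 - c * 0 := hgconst
      rw [hxT] at this; linarith
    have hc0 : c = 0 := by
      rcases mul_eq_zero.1 hcT with h | h
      · exact h
      · exact absurd h hT.ne'
    rw [hderconst n t, ← hc, hc0]
  constructor
  · intro n t s
    exact is_const_of_deriv_eq_zero (hxd n) (hderzero n) t s
  · intro n t
    by_contra h
    push_neg at h
    have hpos : 0 < max (x n t - x (n+1) t) 0 :=
      lt_max_of_lt_left (by linarith)
    have := hDWpos n _ hpos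
    have hz : DW n (max (x n t - x (n+1) t) 0) = 0 := hFzero n t
    linarith
end

section
/- Uncompressed homogeneous Hertzian chains admit no nontrivial time-periodic breathers: if $(x_n)_{n\in\mathbb{Z}}$ is a $T$-periodic solution of $\ddot{x}_n = (x_{n-1}-x_n)_+^{3/2} - (x_n - x_{n+1})_+^{3/2}$ with $\lim_{n\to+\infty}\|x_n - x_{n-1}\|_{L^\infty} = 0$, then each $x_n$ is constant in time and $x_n \le x_{n+1}$ for all $n$. -/
open intervalIntegral Set

/-- Uncompressed homogeneous Hertzian chains admit no nontrivial time-periodic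
breathers: any `T`-periodic solution of
`x_n'' = (x_{n-1}-x_n)_+^{3/2} - (x_n-x_{n+1})_+^{3/2}` whose relative
displacements tend to `0` uniformly in time as `n → +∞` is static and
nondecreasing in `n`. -/
theorem no_breathers_hertz_chain
    (x : ℤ → ℝ → ℝ) (hx : ∀ n, ContDiff ℝ 2 (x n))
    (T : ℝ) (hT : 0 < T)
    (hper : ∀ n t, x n (t + T) = x n t)
    (heq : ∀ n t, deriv (deriv (x n)) t
      = (max (x (n-1) t - x n t) 0) ^ ((3:ℝ)/2)
        - (max (x n t - x (n+1) t) 0) ^ ((3:ℝ)/2))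
    (hloc : ∀ ε > (0:ℝ), ∃ N : ℤ, ∀ n ≥ N, ∀ t, |x n t - x (n-1) t| ≤ ε) :
    (∀ n t s, x n t = x n s) ∧ (∀ n t, x n t ≤ x (n+1) t) := by
  set f : ℤ → ℝ → ℝ := fun n t => (max (x (n-1) t - x n t) 0) ^ ((3:ℝ)/2) with hf
  have hxc : ∀ n, Continuous (x n) := fun n => (hx n).continuous
  have hfc : ∀ n, Continuous (f n) := by
    intro n
    apply Continuous.rpow_const (by fun_prop)
    intro t; right; norm_num
  have hfnn : ∀ n t, 0 ≤ f n t := fun n t => Real.rpow_nonneg (le_max_right _ _) _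
  have heq' : ∀ n t, deriv (deriv (x n)) t = f n t - f (n+1) t := by
    intro n t
    simpa [hf, add_sub_cancel_right] using heq n t
  have hd1 : ∀ n, Differentiable ℝ (deriv (x n)) := by
    intro n
    have h2 : ContDiff ℝ (1+1) (x n) := by norm_num; exact hx n
    exact ((contDiff_succ_iff_deriv.mp h2).2.2).differentiable one_ne_zero
  -- derivative is periodic
  have hder_per : ∀ n t, deriv (x n) (t + T) = deriv (x n) t := by
    intro n t
    have h : (fun s => x n (s + T)) = x n := funext fun s => hper n s
    calc deriv (x n) (t + T) = deriv (fun s => x n (s + T)) t :=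
          (deriv_comp_add_const (x n) T t).symm
    _ = deriv (x n) t := by rw [h]
  -- mean of second derivative over a period vanishes
  have hint0 : ∀ n a, ∫ t in a..(a+T), deriv (deriv (x n)) t = 0 := by
    intro n a
    have hcont : Continuous (fun t => f n t - f (n+1) t) := (hfc n).sub (hfc (n+1))
    have h : ∫ t in a..(a+T), deriv (deriv (x n)) t = deriv (x n) (a+T) - deriv (x n) a := by
      apply integral_deriv_eq_sub (fun t _ => (hd1 n) t)
      have h2 : deriv (deriv (x n)) = fun t => f n t - f (n+1) t := funext (heq' n)
      rw [h2]
      exact hcont.intervalIntegrable _ _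
    rw [h, hder_per, sub_self]
  -- window integrals are constant in n
  have hII : ∀ a n, ∫ t in a..(a+T), f n t = ∫ t in a..(a+T), f (n+1) t := by
    intro a n
    have h1 := hint0 n a
    have h2 : ∫ t in a..(a+T), (f n t - f (n+1) t) =
        (∫ t in a..(a+T), f n t) - ∫ t in a..(a+T), f (n+1) t :=
      integral_sub ((hfc n).intervalIntegrable _ _) ((hfc (n+1)).intervalIntegrable _ _)
    have h3 : ∫ t in a..(a+T), (f n t - f (n+1) t) = 0 := by
      rw [← h1]; congr 1; exact funext fun t => (heq' n t).symm
    linarith [h2.symm.trans h3]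
  have hIconst : ∀ a n, ∫ t in a..(a+T), f n t = ∫ t in a..(a+T), f 0 t := by
    intro a n
    induction n using Int.induction_on with
    | zero => rfl
    | succ k ih => rw [← hII a k]; exact ih
    | pred k ih =>
        have h := hII a (-(k:ℤ)-1)
        rw [show (-(k:ℤ)-1)+1 = -(k:ℤ) by ring] at h
        rw [h]; exact ih
  -- the window integral is ≤ every positive η
  have hsmall : ∀ a : ℝ, ∀ η > (0:ℝ), (∫ t in a..(a+T), f 0 t) ≤ η := by
    intro a η hη
    set ε : ℝ := (η / T) ^ ((2:ℝ)/3) with hε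
    have hηT : 0 < η / T := div_pos hη hT
    have hεpos : 0 < ε := Real.rpow_pos_of_pos hηT _
    obtain ⟨N, hN⟩ := hloc ε hεpos
    set n : ℤ := max N 1 with hn
    have hnN : n ≥ N := le_max_left _ _
    have hbound : ∀ t, f n t ≤ ε ^ ((3:ℝ)/2) := by
      intro t
      have h1 : |x n t - x (n-1) t| ≤ ε := hN n hnN t
      have h2 : x (n-1) t - x n t ≤ ε := by
        have := abs_le.mp h1
        linarith [this.1]
      have h3 : max (x (n-1) t - x n t) 0 ≤ ε := max_le h2 hεpos.le
      exact Real.rpow_le_rpow (le_max_right _ _) h3 (by norm_num)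
    have hεval : ε ^ ((3:ℝ)/2) = η / T := by
      rw [hε, ← Real.rpow_mul hηT.le]
      norm_num
    have hmono : (∫ t in a..(a+T), f n t) ≤ ∫ t in a..(a+T), (η/T) := by
      apply integral_mono_on (by linarith)
        ((hfc n).intervalIntegrable _ _) (intervalIntegrable_const)
      intro t _
      rw [← hεval]; exact hbound t
    rw [integral_const, smul_eq_mul] at hmono
    have : (∫ t in a..(a+T), f n t) ≤ η := by
      rw [show a + T - a = T by ring] at hmono
      rw [mul_div_cancel₀ η hT.ne'] at hmono
      exact hmono
    calc (∫ t in a..(a+T), f 0 t) = ∫ t in a..(a+T), f n t := (hIconst a n).symm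
    _ ≤ η := this
  have hI0 : ∀ a n, ∫ t in a..(a+T), f n t = 0 := by
    intro a n
    have h1 : (0:ℝ) ≤ ∫ t in a..(a+T), f n t :=
      integral_nonneg (by linarith) (fun t _ => hfnn n t)
    have h2 : (∫ t in a..(a+T), f n t) ≤ 0 := by
      by_contra hcon
      push_neg at hcon
      have := hsmall a _ (half_pos (by rw [hIconst a n] at hcon; exact hcon))
      rw [← hIconst a n] at this
      linarith [hIconst a n ▸ hcon]
    linarith
  -- pointwise vanishing of forces
  have hfzero : ∀ n t, f n t = 0 := by
    intro n t
    by_contra hcon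
    have hpos : 0 < f n t := lt_of_le_of_ne (hfnn n t) (Ne.symm hcon)
    have h : (∫ s in t..(t+T), (0:ℝ)) < ∫ s in t..(t+T), f n s := by
      apply integral_lt_integral_of_continuousOn_of_le_of_exists_lt (by linarith)
        continuousOn_const ((hfc n).continuousOn)
      · exact fun s _ => hfnn n s
      · exact ⟨t, ⟨le_refl t, by linarith⟩, hpos⟩
    rw [integral_zero, hI0 t n] at h
    exact lt_irrefl 0 h
  -- consequences: ordering
  have hord : ∀ n t, x (n-1) t ≤ x n t := by
    intro n t
    have h := hfzero n t
    have hb : max (x (n-1) t - x n t) 0 = 0 := by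
      by_contra hb
      have hbpos : 0 < max (x (n-1) t - x n t) 0 :=
        lt_of_le_of_ne (le_max_right _ _) (Ne.symm hb)
      have : (0:ℝ) < f n t := Real.rpow_pos_of_pos hbpos _
      linarith [this, h.le, h.ge]
    have := max_eq_right_iff.mp hb
    linarith
  -- consequences: second derivative vanishes, so x n is affine, hence constant
  have hstatic : ∀ n t s, x n t = x n s := by
    intro n
    have hzero : ∀ t, deriv (deriv (x n)) t = 0 := by
      intro t
      rw [heq' n t, hfzero n t, hfzero (n+1) t, sub_self]
    have hderconst : ∀ t, deriv (x n) t = deriv (x n) 0 :=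
      fun t => is_const_of_deriv_eq_zero (hd1 n) hzero t 0
    set c : ℝ := deriv (x n) 0 with hc
    have hdx : Differentiable ℝ (x n) := (hx n).differentiable two_ne_zero
    have hlin : ∀ t, x n t = x n 0 + c * t := by
      intro t
      have hg : ∀ s, deriv (fun u => x n u - c * u) s = 0 := by
        intro s
        have hcu : HasDerivAt (fun u : ℝ => c * u) c s := by simpa using (hasDerivAt_id s).const_mul c
        rw [deriv_fun_sub (hdx s) hcu.differentiableAt, hderconst s, hcu.deriv, sub_self]
      have hgd : Differentiable ℝ (fun u => x n u - c * u) :=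
        hdx.sub (differentiable_id.const_mul c)
      have := is_const_of_deriv_eq_zero hgd hg t 0
      simp at this
      linarith
    have hc0 : c = 0 := by
      have h1 := hper n 0
      rw [hlin (0 + T), hlin 0] at h1
      have : c * T = 0 := by linarith [h1]
      rcases mul_eq_zero.mp this with h | h
      · exact h
      · exact absurd h hT.ne'
    intro t s
    rw [hlin t, hlin s, hc0]
    ring
  refine ⟨hstatic, fun n t => ?_⟩
  have := hord (n+1) t
  simpa using this
end

section
/- The function $g(x) = (3/10)^3 \cos^6(x/3)$ for $|x| \le 3\pi/2$ and $g(x) = 0$ otherwise, is $C^2$ on $\mathbb{R}$ and satisfies the differential equation $g'' = -4g + g\,|g|^{-1/3}$ on the open interval $(-3\pi/2, 3\pi/2)$ (where $g > 0$, so $g|g|^{-1/3} = g^{2/3}$). -/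
open Real


lemma pp_abs_le (t : ℝ) : |max t 0| ≤ |t| := by
  rw [abs_of_nonneg (le_max_right t 0)]
  rcases le_total t 0 with h | h
  · simp [max_eq_right h, abs_nonneg]
  · simp [max_eq_left h, le_abs_self]

lemma hasDerivAt_pp_pow (n : ℕ) (hn : 2 ≤ n) (t : ℝ) :
    HasDerivAt (fun s : ℝ => max s 0 ^ n) (n * max t 0 ^ (n - 1)) t := by
  rcases lt_trichotomy t 0 with ht | ht | ht
  · have hev : (fun s : ℝ => max s 0 ^ n) =ᶠ[nhds t] (fun _ => (0:ℝ)) := by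
      filter_upwards [eventually_lt_nhds ht] with s hs
      simp [max_eq_right hs.le, zero_pow (by omega : n ≠ 0)]
    have := (hasDerivAt_const t (0:ℝ)).congr_of_eventuallyEq hev
    rw [max_eq_right ht.le, zero_pow (by omega : n - 1 ≠ 0), mul_zero]
    exact this
  · subst ht
    rw [hasDerivAt_iff_tendsto_slope]
    have hmax : max (0:ℝ) 0 ^ (n-1) = 0 := by
      simp [zero_pow (by omega : n - 1 ≠ 0)]
    rw [hmax, mul_zero]
    apply squeeze_zero_norm' (a := fun s : ℝ => |s| ^ (n - 1))
    · filter_upwards [self_mem_nhdsWithin] with s hs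
      have hs0 : s ≠ 0 := hs
      rw [slope_def_field]
      simp only [max_self, zero_pow (by omega : n ≠ 0), sub_zero]
      rw [div_eq_mul_inv, norm_mul, norm_inv, norm_pow]
      have h1 : ‖max s 0‖ ≤ |s| := pp_abs_le s
      calc ‖max s 0‖ ^ n * ‖s‖⁻¹ ≤ |s| ^ n * |s|⁻¹ := by
            gcongr
            exact (Real.norm_eq_abs s).ge
        _ = |s| ^ (n - 1) := by
            rw [← pow_sub_one_mul (by omega : n ≠ 0) |s|, mul_assoc,
              mul_inv_cancel₀ (abs_ne_zero.2 hs0), mul_one]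
    · have h2 : Continuous (fun s : ℝ => |s| ^ (n-1)) := continuous_abs.pow (n-1)
      have h3 := h2.tendsto 0
      rw [abs_zero, zero_pow (by omega : n - 1 ≠ 0)] at h3
      exact h3.mono_left nhdsWithin_le_nhds
  · have hev : (fun s : ℝ => max s 0 ^ n) =ᶠ[nhds t] (fun s => s ^ n) := by
      filter_upwards [eventually_gt_nhds ht] with s hs
      simp [max_eq_left hs.le]
    have := (hasDerivAt_pow n t).congr_of_eventuallyEq hev
    rwa [max_eq_left ht.le]

lemma contDiff_pp6 : ContDiff ℝ 2 (fun t : ℝ => max t 0 ^ 6) := by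
  have cpp : Continuous (fun t : ℝ => max t 0) := continuous_id.max continuous_const
  have hd1 : deriv (fun t : ℝ => max t 0 ^ 6) = fun t => 6 * max t 0 ^ 5 := by
    funext t
    exact_mod_cast (hasDerivAt_pp_pow 6 (by norm_num) t).deriv
  have h6 : (2 : WithTop ℕ∞) = 1 + 1 := by norm_num
  rw [h6, contDiff_succ_iff_deriv]
  refine ⟨fun t => (hasDerivAt_pp_pow 6 (by norm_num) t).differentiableAt, by simp, ?_⟩
  rw [hd1]
  have h1 : (1 : WithTop ℕ∞) = 0 + 1 := by norm_num
  rw [h1, contDiff_succ_iff_deriv]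
  have hda : ∀ t : ℝ, HasDerivAt (fun s : ℝ => 6 * max s 0 ^ 5) (6 * (5 * max t 0 ^ 4)) t :=
    fun t => by exact_mod_cast (hasDerivAt_pp_pow 5 (by norm_num) t).const_mul 6
  refine ⟨fun t => (hda t).differentiableAt, by simp, ?_⟩
  rw [contDiff_zero]
  have : deriv (fun s : ℝ => 6 * max s 0 ^ 5) = fun t => 6 * (5 * max t 0 ^ 4) := by
    funext t; exact (hda t).deriv
  rw [this]
  exact continuous_const.mul (continuous_const.mul (cpp.pow 4))

/-- The compacton profile `g(x) = (3/10)³ cos⁶(x/3)` for `|x| ≤ 3π/2`, `0` else. -/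
noncomputable def compacton (x : ℝ) : ℝ :=
  if |x| ≤ 3 * π / 2 then (3/10)^3 * Real.cos (x/3) ^ 6 else 0

/-- The compacton is `C²` and solves `g'' = -4g + g|g|^{-1/3}` on
`(-3π/2, 3π/2)`. -/
theorem compacton_solves_ode :
    ContDiff ℝ 2 compacton ∧
    ∀ x ∈ Set.Ioo (-(3 * π / 2)) (3 * π / 2),
      deriv (deriv compacton) x
        = -4 * compacton x + compacton x * |compacton x| ^ (-(1:ℝ)/3) := by
  have hpi := Real.pi_pos
  -- the globally C² model function
  set φ : ℝ → ℝ := fun x => (3/10:ℝ)^3 * max (Real.cos (x/3)) 0 ^ 6 with hφdef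
  have hcos3 : ContDiff ℝ 2 (fun x : ℝ => Real.cos (x/3)) :=
    Real.contDiff_cos.comp (contDiff_id.div_const 3)
  have hφ : ContDiff ℝ 2 φ := contDiff_const.mul (contDiff_pp6.comp hcos3)
  have eq_phi : ∀ x : ℝ, |x| < 9 * π / 2 → compacton x = φ x := by
    intro x hx
    by_cases h : |x| ≤ 3 * π / 2
    · have h1 : |x/3| ≤ π/2 := by rw [abs_div]; rw [abs_of_pos (by norm_num : (0:ℝ) < 3)]; linarith
      have h2 : 0 ≤ Real.cos (x/3) :=
        Real.cos_nonneg_of_mem_Icc ⟨by cases abs_le.1 h1 with | intro a b => linarith,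
          (abs_le.1 h1).2⟩
      simp only [compacton, if_pos h, hφdef, max_eq_left h2]
    · have h3 : π/2 < |x|/3 := by push_neg at h; linarith
      have h4 : |x|/3 < π + π/2 := by linarith
      have h5 : Real.cos (x/3) < 0 := by
        have := Real.cos_neg_of_pi_div_two_lt_of_lt h3 h4
        rwa [show |x|/3 = |x/3| by rw [abs_div]; norm_num, Real.cos_abs] at this
      simp only [compacton, if_neg h, hφdef, max_eq_right h5.le]
      norm_num
  constructor
  · rw [contDiff_iff_contDiffAt]
    intro x
    by_cases hx : |x| < 9 * π / 2
    · have hU : IsOpen {y : ℝ | |y| < 9 * π / 2} := isOpen_lt continuous_abs continuous_const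
      exact hφ.contDiffAt.congr_of_eventuallyEq
        (Filter.eventuallyEq_of_mem (hU.mem_nhds hx) fun y hy => eq_phi y hy)
    · have hV : IsOpen {y : ℝ | 3 * π / 2 < |y|} := isOpen_lt continuous_const continuous_abs
      have hxV : x ∈ {y : ℝ | 3 * π / 2 < |y|} := by
        push_neg at hx; simp only [Set.mem_setOf_eq]; linarith
      exact (contDiffAt_const (c := (0:ℝ))).congr_of_eventuallyEq
        (Filter.eventuallyEq_of_mem (hV.mem_nhds hxV)
          (fun y hy => by
            have h' : ¬ |y| ≤ 3 * π / 2 := not_le.2 hy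
            simp only [compacton, if_neg h']))
  · intro x hx
    obtain ⟨hx1, hx2⟩ := hx
    set ψ : ℝ → ℝ := fun y => (3/10:ℝ)^3 * Real.cos (y/3) ^ 6 with hψdef
    have hIoo : IsOpen (Set.Ioo (-(3 * π / 2)) (3 * π / 2)) := isOpen_Ioo
    have heq : compacton =ᶠ[nhds x] ψ := by
      refine Filter.eventuallyEq_of_mem (hIoo.mem_nhds ⟨hx1, hx2⟩) fun y hy => ?_
      have : |y| ≤ 3 * π / 2 := by
        rw [abs_le]; exact ⟨le_of_lt (by simpa using hy.1), hy.2.le⟩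
      simp [compacton, if_pos this, hψdef]
    have hdd : deriv (deriv compacton) x = deriv (deriv ψ) x :=
      (heq.deriv.deriv).eq_of_nhds
    -- derivatives of ψ
    have h1 : ∀ y : ℝ, HasDerivAt (fun z : ℝ => z/3) (1/3) y :=
      fun y => (hasDerivAt_id y).div_const 3
    have h2 : ∀ y : ℝ, HasDerivAt (fun z : ℝ => Real.cos (z/3)) (-Real.sin (y/3) * (1/3)) y :=
      fun y => by have := (Real.hasDerivAt_cos (y/3)).comp y (h1 y); exact this
    have hψ' : deriv ψ = fun y => (3/10:ℝ)^3 * ((6:ℕ) * Real.cos (y/3) ^ 5 * (-Real.sin (y/3) * (1/3))) := by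
      funext y
      exact (((h2 y).pow 6).const_mul ((3/10:ℝ)^3)).deriv
    have hψ'eq : (fun y => (3/10:ℝ)^3 * ((6:ℕ) * Real.cos (y/3) ^ 5 * (-Real.sin (y/3) * (1/3)))) =
        fun y => (-(27:ℝ)/500) * (Real.cos (y/3) ^ 5 * Real.sin (y/3)) := by
      funext y; push_cast; ring
    have hsin : HasDerivAt (fun z : ℝ => Real.sin (z/3)) (Real.cos (x/3) * (1/3)) x :=
      by have := (Real.hasDerivAt_sin (x/3)).comp x (h1 x); exact this
    have hprod : HasDerivAt (fun y => Real.cos (y/3) ^ 5 * Real.sin (y/3))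
        (((5:ℕ) * Real.cos (x/3) ^ 4 * (-Real.sin (x/3) * (1/3))) * Real.sin (x/3)
          + Real.cos (x/3) ^ 5 * (Real.cos (x/3) * (1/3))) x :=
      ((h2 x).pow 5).mul hsin
    have h2nd : deriv (deriv ψ) x = (-(27:ℝ)/500) *
        (((5:ℕ) * Real.cos (x/3) ^ 4 * (-Real.sin (x/3) * (1/3))) * Real.sin (x/3)
          + Real.cos (x/3) ^ 5 * (Real.cos (x/3) * (1/3))) := by
      rw [hψ', hψ'eq]
      exact (hprod.const_mul _).deriv
    -- RHS computation
    have hxabs : |x| ≤ 3 * π / 2 := by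
      rw [abs_le]; constructor <;> linarith
    have hcpos : 0 < Real.cos (x/3) := by
      apply Real.cos_pos_of_mem_Ioo
      constructor <;> [linarith; linarith]
    have hcval : compacton x = ((3/10:ℝ) * Real.cos (x/3) ^ 2) ^ 3 := by
      simp only [compacton, if_pos hxabs]; ring
    set y : ℝ := (3/10:ℝ) * Real.cos (x/3) ^ 2 with hy
    have hypos : 0 < y := by positivity
    have habs : |(y:ℝ) ^ 3| = y ^ 3 := abs_of_pos (by positivity)
    have hrpow : (y ^ 3 : ℝ) ^ (-(1:ℝ)/3) = y⁻¹ := by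
      rw [← Real.rpow_natCast y 3, ← Real.rpow_mul hypos.le]
      rw [show ((3:ℕ):ℝ) * (-(1:ℝ)/3) = -1 by norm_num, Real.rpow_neg_one]
    rw [hdd, h2nd, hcval, habs, hrpow]
    have hs : Real.sin (x/3) ^ 2 = 1 - Real.cos (x/3) ^ 2 := Real.sin_sq _
    have hinv : y ^ 3 * y⁻¹ = y ^ 2 := by
      field_simp
    rw [hinv, hy]
    push_cast
    linear_combination (9/100 * Real.cos (x/3) ^ 4) * hs
end

section
/- The frequency function $\omega(q) = \sqrt{1 + 2v_1(1-\cos q)}$ with $v_1 > 0$ has exactly one inflection point $q_c$ in $(0,\pi)$, which lies in $(0, \pi/2)$ and satisfies $\cos q_c = v_1(1 - \cos q_c)^2$; equivalently, the quantity $\omega_2(q) = \cos q - \frac{v_1 \sin^2 q}{1 + 2v_1(1-\cos q)}$ vanishes exactly once on $(0,\pi)$, at $q = q_c \in (0,\pi/2)$, and changes sign there. -/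
open Real

/-- The quantity `ω₂(q) = cos q - v₁ sin²q / (1 + 2v₁(1-cos q))` vanishes at
exactly one point `q_c` of `(0,π)`, which lies in `(0, π/2)`, satisfies
`cos q_c = v₁ (1 - cos q_c)²`, and `ω₂` changes sign there. -/
theorem inflection_point_unique (v₁ : ℝ) (hv₁ : 0 < v₁) :
    ∃ qc : ℝ, qc ∈ Set.Ioo 0 (π/2) ∧
      Real.cos qc = v₁ * (1 - Real.cos qc) ^ 2 ∧
      (∀ q ∈ Set.Ioo (0:ℝ) π,
        (Real.cos q - v₁ * Real.sin q ^ 2 / (1 + 2 * v₁ * (1 - Real.cos q)) = 0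
          ↔ q = qc)) ∧
      (∀ q ∈ Set.Ioo (0:ℝ) qc,
        0 < Real.cos q - v₁ * Real.sin q ^ 2 / (1 + 2 * v₁ * (1 - Real.cos q))) ∧
      (∀ q ∈ Set.Ioo qc π,
        Real.cos q - v₁ * Real.sin q ^ 2 / (1 + 2 * v₁ * (1 - Real.cos q)) < 0) := by
  set g : ℝ → ℝ := fun c => c - v₁ * (1 - c) ^ 2 with hg
  have gmono : ∀ a b : ℝ, a < b → b ≤ 1 → g a < g b := by
    intro a b hab hb1
    simp only [hg]
    nlinarith [mul_nonneg (mul_nonneg hv₁.le (sub_pos.mpr hab).le)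
      (by linarith : (0:ℝ) ≤ 2 - a - b)]
  -- find root of g in (0,1)
  have hcont : ContinuousOn g (Set.Icc 0 1) := by fun_prop
  have h0 : g 0 < 0 := by simp [hg]; nlinarith
  have h1 : (0:ℝ) < g 1 := by simp [hg]
  obtain ⟨c, hc, hgc⟩ := intermediate_value_Icc (by norm_num : (0:ℝ) ≤ 1) hcont
    ⟨le_of_lt h0, le_of_lt h1⟩
  have hc0 : 0 < c := by
    rcases lt_or_eq_of_le hc.1 with h | h
    · exact h
    · exfalso; rw [← h] at hgc; linarith
  have hc1 : c < 1 := by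
    rcases lt_or_eq_of_le hc.2 with h | h
    · exact h
    · exfalso; rw [h] at hgc; linarith
  set qc := Real.arccos c with hqc
  have hcosqc : Real.cos qc = c := Real.cos_arccos (by linarith) (by linarith)
  have hqc0 : 0 < qc := by
    rw [hqc]; exact Real.arccos_pos.mpr hc1
  have hqcpi2 : qc < π / 2 := by
    rw [hqc]; exact Real.arccos_lt_pi_div_two.mpr hc0
  have hqcpi : qc < π := lt_trans hqcpi2 (by linarith [Real.pi_pos])
  -- expression rewrite
  have hD : ∀ q : ℝ, (0:ℝ) < 1 + 2 * v₁ * (1 - Real.cos q) := by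
    intro q
    have := Real.cos_le_one q
    nlinarith
  have hexpr : ∀ q : ℝ,
      Real.cos q - v₁ * Real.sin q ^ 2 / (1 + 2 * v₁ * (1 - Real.cos q))
        = g (Real.cos q) / (1 + 2 * v₁ * (1 - Real.cos q)) := by
    intro q
    have hD' := (hD q).ne'
    have hs : Real.sin q ^ 2 = 1 - Real.cos q ^ 2 := Real.sin_sq q
    rw [eq_div_iff hD', sub_mul, div_mul_cancel₀ _ hD', hs]
    simp only [hg]
    ring
  have hanti : StrictAntiOn Real.cos (Set.Icc 0 π) := Real.strictAntiOn_cos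
  have hqcmem : qc ∈ Set.Icc (0:ℝ) π := ⟨le_of_lt hqc0, le_of_lt hqcpi⟩
  have hpos : ∀ q ∈ Set.Ioo (0:ℝ) qc,
      0 < Real.cos q - v₁ * Real.sin q ^ 2 / (1 + 2 * v₁ * (1 - Real.cos q)) := by
    intro q hq
    rw [hexpr]
    apply div_pos _ (hD q)
    have hcos : Real.cos qc < Real.cos q :=
      hanti ⟨le_of_lt hq.1, by linarith [hq.2]⟩ hqcmem hq.2
    have := gmono (Real.cos qc) (Real.cos q) hcos (Real.cos_le_one q)
    rw [hcosqc] at this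
    linarith [hgc ▸ this]
  have hneg : ∀ q ∈ Set.Ioo qc π,
      Real.cos q - v₁ * Real.sin q ^ 2 / (1 + 2 * v₁ * (1 - Real.cos q)) < 0 := by
    intro q hq
    rw [hexpr]
    apply div_neg_of_neg_of_pos _ (hD q)
    have hcos : Real.cos q < Real.cos qc :=
      hanti hqcmem ⟨by linarith [hq.1], le_of_lt hq.2⟩ hq.1
    have := gmono (Real.cos q) (Real.cos qc) hcos (Real.cos_le_one qc)
    rw [hcosqc, hgc] at this
    linarith
  refine ⟨qc, ⟨hqc0, hqcpi2⟩, ?_, ?_, hpos, hneg⟩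
  · have : g c = 0 := hgc
    simp only [hg] at this
    rw [hcosqc]; linarith
  · intro q hq
    constructor
    · intro h
      by_contra hne
      rcases lt_or_gt_of_ne hne with hlt | hgt
      · have := hpos q ⟨hq.1, hlt⟩; linarith
      · have := hneg q ⟨hgt, hq.2⟩; linarith
    · intro h
      subst h
      rw [hexpr, hcosqc, hgc, zero_div]
end
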